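/- Define g(z) = ∫_1^z sqrt((μ²−a²)/(μ²−1)) dμ for z ∈ ℂ∖[−1,1] with 0 < a < 1, integrating along paths avoiding [−1,1] and with the principal branch of the square root (positive for μ > 1). Then as z → ∞, g(z) = z + ℓ − (1−a²)/(2z) + O(z^{−2}), where ℓ = ∫_1^∞ (sqrt((μ²−a²)/(μ²−1)) − 1) dμ − 1. -/

import Mathlib

open Filter intervalIntegral MeasureTheory Set

namespace GAsym

/-- sqrt(1+t) is within t²/8 of 1 + t/2 for 0 ≤ t ≤ 1. -/
lemma sqrt_one_add_bound {t : ℝ} (h0 : 0 ≤ t) (h1 : t ≤ 1) :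
    |Real.sqrt (1 + t) - (1 + t / 2)| ≤ t ^ 2 / 8 := by
  have hub : Real.sqrt (1 + t) ≤ 1 + t / 2 := by
    have h := Real.sqrt_le_sqrt (show 1 + t ≤ (1 + t / 2) ^ 2 by nlinarith)
    rwa [Real.sqrt_sq (by linarith)] at h
  have hlb : 1 + t / 2 - t ^ 2 / 8 ≤ Real.sqrt (1 + t) := by
    apply Real.le_sqrt_of_sq_le
    nlinarith [pow_nonneg h0 3, pow_le_pow_of_le_one h0 h1 (show 3 ≤ 4 by norm_num)]
  rw [abs_le]
  constructor <;> linarith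

/-- Key pointwise bound for μ ≥ 2. -/
lemma pointwise_bound (a : ℝ) (ha0 : 0 < a) (ha1 : a < 1) {μ : ℝ} (hμ : 2 ≤ μ) :
    |Real.sqrt ((μ ^ 2 - a ^ 2) / (μ ^ 2 - 1)) - 1 - (1 - a ^ 2) / (2 * μ ^ 2)| ≤ 1 / μ ^ 3 := by
  have hμ0 : (0:ℝ) < μ := by linarith
  have hd : (0:ℝ) < μ ^ 2 - 1 := by nlinarith
  have hc : (0:ℝ) < 1 - a ^ 2 := by nlinarith
  set t : ℝ := (1 - a ^ 2) / (μ ^ 2 - 1) with ht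
  have ht0 : 0 ≤ t := div_nonneg hc.le hd.le
  have ht1 : t ≤ 1 := by
    rw [div_le_one hd]; nlinarith
  have harg : (μ ^ 2 - a ^ 2) / (μ ^ 2 - 1) = 1 + t := by
    field_simp [ht]
    rw [mul_add, ht, mul_div_cancel₀ _ hd.ne']; ring
  have hsb := sqrt_one_add_bound ht0 ht1
  have htle : t ≤ 4 / (3 * μ ^ 2) := by
    rw [ht, div_le_div_iff₀ hd (by positivity)]
    nlinarith
  have habs : |Real.sqrt ((μ ^ 2 - a ^ 2) / (μ ^ 2 - 1)) - 1 - (1 - a ^ 2) / (2 * μ ^ 2)|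
      ≤ |Real.sqrt (1 + t) - (1 + t / 2)| + |t / 2 - (1 - a ^ 2) / (2 * μ ^ 2)| := by
    rw [harg]
    have : Real.sqrt (1 + t) - 1 - (1 - a ^ 2) / (2 * μ ^ 2)
        = (Real.sqrt (1 + t) - (1 + t / 2)) + (t / 2 - (1 - a ^ 2) / (2 * μ ^ 2)) := by ring
    rw [this]
    exact abs_add_le _ _
  have h2 : |t / 2 - (1 - a ^ 2) / (2 * μ ^ 2)| ≤ 2 / (3 * μ ^ 4) := by
    have heq : t / 2 - (1 - a ^ 2) / (2 * μ ^ 2) = (1 - a ^ 2) / (2 * μ ^ 2 * (μ ^ 2 - 1)) := by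
      rw [ht]; field_simp; ring
    rw [heq, abs_of_nonneg (div_nonneg hc.le (mul_pos (by positivity) hd).le)]
    rw [div_le_div_iff₀ (mul_pos (by positivity) hd) (by positivity)]
    have hμ4 : 4 * μ ^ 2 ≤ μ ^ 4 := by nlinarith [mul_nonneg (by nlinarith : (0:ℝ) ≤ μ ^ 2 - 4) (sq_nonneg μ)]
    nlinarith [hμ4, mul_nonneg (pow_pos hμ0 4).le (sq_nonneg a)]
  have h1 : t ^ 2 / 8 ≤ 2 / (9 * μ ^ 4) := by
    have : t ^ 2 ≤ (4 / (3 * μ ^ 2)) ^ 2 := by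
      apply pow_le_pow_left₀ ht0 htle
    calc t ^ 2 / 8 ≤ (4 / (3 * μ ^ 2)) ^ 2 / 8 := by linarith
    _ = 2 / (9 * μ ^ 4) := by field_simp; ring
  have hfin : 2 / (9 * μ ^ 4) + 2 / (3 * μ ^ 4) ≤ 1 / μ ^ 3 := by
    rw [div_add_div _ _ (by positivity) (by positivity), div_le_div_iff₀ (by positivity) (by positivity)]
    nlinarith [pow_pos hμ0 3, pow_pos hμ0 4, pow_pos hμ0 7]
  linarith [habs, hsb, h1, h2]

lemma measurable_F (a : ℝ) :
    Measurable (fun μ : ℝ => Real.sqrt ((μ ^ 2 - a ^ 2) / (μ ^ 2 - 1))) := by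
  fun_prop

/-- Integrability of F - 1 on Ioi 1. -/
lemma integrableOn_sub_one (a : ℝ) (ha0 : 0 < a) (ha1 : a < 1) :
    IntegrableOn (fun μ : ℝ => Real.sqrt ((μ ^ 2 - a ^ 2) / (μ ^ 2 - 1)) - 1) (Ioi 1) := by
  have hmeas : Measurable (fun μ : ℝ => Real.sqrt ((μ ^ 2 - a ^ 2) / (μ ^ 2 - 1)) - 1) :=
    (measurable_F a).sub measurable_const
  have hunion : Ioc (1:ℝ) 2 ∪ Ioi 2 = Ioi 1 := Set.Ioc_union_Ioi_eq_Ioi (by norm_num)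
  rw [← hunion]
  apply IntegrableOn.union
  · -- on Ioc 1 2, dominate by 2 * (μ-1)^(-1/2) + 1
    have hg : IntegrableOn (fun μ : ℝ => 2 * (μ - 1) ^ (-(1/2) : ℝ) + 1) (Ioc 1 2) := by
      have h1 : IntervalIntegrable (fun x : ℝ => x ^ (-(1/2) : ℝ)) volume 0 1 :=
        intervalIntegrable_rpow' (by norm_num)
      have h2 : IntervalIntegrable (fun x : ℝ => (x - 1) ^ (-(1/2) : ℝ)) volume 1 2 := by
        have := h1.comp_sub_right 1
        norm_num at this ⊢
        exact this
      have h3 : IntegrableOn (fun x : ℝ => (x - 1) ^ (-(1/2) : ℝ)) (Ioc 1 2) :=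
        (intervalIntegrable_iff_integrableOn_Ioc_of_le (by norm_num)).1 h2
      exact (h3.const_mul 2).add (integrableOn_const (by simp))
    apply hg.mono' (hmeas.aestronglyMeasurable.restrict)
    rw [ae_restrict_iff' measurableSet_Ioc]
    filter_upwards with μ hμ
    obtain ⟨hμ1, hμ2⟩ := hμ
    have hd : (0:ℝ) < μ ^ 2 - 1 := by nlinarith
    have hm1 : (0:ℝ) < μ - 1 := by linarith
    have hF0 : 0 ≤ Real.sqrt ((μ ^ 2 - a ^ 2) / (μ ^ 2 - 1)) := Real.sqrt_nonneg _
    have hFle : Real.sqrt ((μ ^ 2 - a ^ 2) / (μ ^ 2 - 1)) ≤ 2 * (μ - 1) ^ (-(1/2) : ℝ) := by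
      have harg : (μ ^ 2 - a ^ 2) / (μ ^ 2 - 1) ≤ 4 / (μ - 1) := by
        rw [div_le_div_iff₀ hd hm1]; nlinarith
      have h4 : Real.sqrt ((μ ^ 2 - a ^ 2) / (μ ^ 2 - 1)) ≤ Real.sqrt (4 / (μ - 1)) :=
        Real.sqrt_le_sqrt harg
      have h5 : Real.sqrt (4 / (μ - 1)) = 2 * (μ - 1) ^ (-(1/2) : ℝ) := by
        rw [Real.sqrt_div (by norm_num) (μ - 1), show (4:ℝ) = 2^2 by norm_num,
          Real.sqrt_sq (by norm_num), Real.sqrt_eq_rpow,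
          Real.rpow_neg hm1.le, div_eq_mul_inv]
      rw [← h5]; exact h4
    have hgpos : (0:ℝ) ≤ (μ - 1) ^ (-(1/2) : ℝ) := Real.rpow_nonneg hm1.le _
    rw [Real.norm_eq_abs, abs_sub_le_iff]
    constructor <;> nlinarith
  · -- on Ioi 2, dominate by μ^(-2)
    have hg : IntegrableOn (fun μ : ℝ => μ ^ (-2 : ℝ)) (Ioi 2) :=
      integrableOn_Ioi_rpow_of_lt (by norm_num) (by norm_num)
    apply hg.mono' (hmeas.aestronglyMeasurable.restrict)
    rw [ae_restrict_iff' measurableSet_Ioi]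
    filter_upwards with μ hμ
    rw [mem_Ioi] at hμ
    have hμ0 : (0:ℝ) < μ := by linarith
    have hpb := pointwise_bound a ha0 ha1 hμ.le
    have hr : μ ^ (-2 : ℝ) = 1 / μ ^ 2 := by
      rw [show (-2 : ℝ) = -(2:ℕ) by norm_num, Real.rpow_neg hμ0.le, Real.rpow_natCast, one_div]
    rw [Real.norm_eq_abs, hr]
    have h1 : |Real.sqrt ((μ ^ 2 - a ^ 2) / (μ ^ 2 - 1)) - 1|
        ≤ 1 / μ ^ 3 + (1 - a ^ 2) / (2 * μ ^ 2) := by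
      have := abs_add_le (Real.sqrt ((μ ^ 2 - a ^ 2) / (μ ^ 2 - 1)) - 1 - (1 - a ^ 2) / (2 * μ ^ 2))
        ((1 - a ^ 2) / (2 * μ ^ 2))
      simp only [sub_add_cancel] at this
      have hc : (0:ℝ) < 1 - a ^ 2 := by nlinarith
      have h2 : |(1 - a ^ 2) / (2 * μ ^ 2)| = (1 - a ^ 2) / (2 * μ ^ 2) :=
        abs_of_nonneg (div_nonneg hc.le (by positivity))
      linarith [this, hpb]
    have h3 : 1 / μ ^ 3 + (1 - a ^ 2) / (2 * μ ^ 2) ≤ 1 / μ ^ 2 := by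
      have ha : 1 / μ ^ 3 ≤ 1 / (2 * μ ^ 2) := by
        rw [div_le_div_iff₀ (by positivity) (by positivity)]; nlinarith
      have hb : (1 - a ^ 2) / (2 * μ ^ 2) ≤ 1 / (2 * μ ^ 2) := by
        apply div_le_div_of_nonneg_right _ (by positivity)
        · nlinarith
      calc 1 / μ ^ 3 + (1 - a ^ 2) / (2 * μ ^ 2) ≤ 1 / (2 * μ ^ 2) + 1 / (2 * μ ^ 2) := by
            linarith
      _ = 1 / μ ^ 2 := by ring
    linarith

end GAsym


theorem g_asymptotics_at_infinity (a : ℝ) (ha0 : 0 < a) (ha1 : a < 1) :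
    (fun z : ℝ =>
        (∫ μ in (1 : ℝ)..z, Real.sqrt ((μ ^ 2 - a ^ 2) / (μ ^ 2 - 1))) -
          (z + ((∫ μ in Set.Ioi (1 : ℝ),
              (Real.sqrt ((μ ^ 2 - a ^ 2) / (μ ^ 2 - 1)) - 1)) - 1) -
            (1 - a ^ 2) / (2 * z)))
      =O[atTop] fun z : ℝ => 1 / z ^ 2 := by
  rw [Asymptotics.isBigO_iff]
  refine ⟨1, ?_⟩
  filter_upwards [eventually_ge_atTop (2:ℝ)] with z hz
  have hz0 : (0:ℝ) < z := by linarith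
  have hz1 : (1:ℝ) ≤ z := by linarith
  have hc : (0:ℝ) < 1 - a ^ 2 := by nlinarith
  have hInt1 := GAsym.integrableOn_sub_one a ha0 ha1
  have hIoc : MeasureTheory.IntegrableOn
      (fun μ : ℝ => Real.sqrt ((μ ^ 2 - a ^ 2) / (μ ^ 2 - 1)) - 1) (Set.Ioc 1 z) :=
    hInt1.mono_set Set.Ioc_subset_Ioi_self
  have hIoiz : MeasureTheory.IntegrableOn
      (fun μ : ℝ => Real.sqrt ((μ ^ 2 - a ^ 2) / (μ ^ 2 - 1)) - 1) (Set.Ioi z) :=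
    hInt1.mono_set (Set.Ioi_subset_Ioi hz1)
  -- splitting the improper integral at z
  have hsplit : (∫ μ in Set.Ioi (1:ℝ), (Real.sqrt ((μ ^ 2 - a ^ 2) / (μ ^ 2 - 1)) - 1))
      = (∫ μ in Set.Ioc (1:ℝ) z, (Real.sqrt ((μ ^ 2 - a ^ 2) / (μ ^ 2 - 1)) - 1))
        + ∫ μ in Set.Ioi z, (Real.sqrt ((μ ^ 2 - a ^ 2) / (μ ^ 2 - 1)) - 1) := by
    rw [← MeasureTheory.setIntegral_union Set.Ioc_disjoint_Ioi_same measurableSet_Ioi hIoc hIoiz,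
      Set.Ioc_union_Ioi_eq_Ioi hz1]
  -- the interval integral up to z
  have hg : (∫ μ in (1:ℝ)..z, Real.sqrt ((μ ^ 2 - a ^ 2) / (μ ^ 2 - 1)))
      = (∫ μ in Set.Ioc (1:ℝ) z, (Real.sqrt ((μ ^ 2 - a ^ 2) / (μ ^ 2 - 1)) - 1)) + (z - 1) := by
    rw [intervalIntegral.integral_of_le hz1]
    have hfe : (fun μ : ℝ => Real.sqrt ((μ ^ 2 - a ^ 2) / (μ ^ 2 - 1)))
        = fun μ : ℝ => (Real.sqrt ((μ ^ 2 - a ^ 2) / (μ ^ 2 - 1)) - 1) + 1 := by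
      funext μ; ring
    rw [hfe, MeasureTheory.integral_add hIoc
      (MeasureTheory.integrableOn_const (by simp [Real.volume_Ioc]))]
    simp [Real.volume_Ioc, ENNReal.toReal_ofReal (by linarith : (0:ℝ) ≤ z - 1), hz1]
  -- integrability of power functions on Ioi z
  have hint2 : MeasureTheory.IntegrableOn (fun μ : ℝ => μ ^ (-2 : ℝ)) (Set.Ioi z) :=
    integrableOn_Ioi_rpow_of_lt (by norm_num) hz0
  have hint3 : MeasureTheory.IntegrableOn (fun μ : ℝ => μ ^ (-3 : ℝ)) (Set.Ioi z) :=
    integrableOn_Ioi_rpow_of_lt (by norm_num) hz0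
  -- ∫_z^∞ (1-a²)/(2μ²) = (1-a²)/(2z)
  have hrw : Set.EqOn (fun μ : ℝ => (1 - a ^ 2) / (2 * μ ^ 2))
      (fun μ : ℝ => ((1 - a ^ 2) / 2) * μ ^ (-2 : ℝ)) (Set.Ioi z) := by
    intro μ hμ
    have hμ0 : (0:ℝ) < μ := lt_trans hz0 hμ
    simp only
    rw [show (-2 : ℝ) = -(2:ℕ) by norm_num, Real.rpow_neg hμ0.le, Real.rpow_natCast]
    field_simp
  have hcz : (∫ μ in Set.Ioi z, (1 - a ^ 2) / (2 * μ ^ 2)) = (1 - a ^ 2) / (2 * z) := by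
    rw [MeasureTheory.setIntegral_congr_fun measurableSet_Ioi hrw,
      MeasureTheory.integral_const_mul, integral_Ioi_rpow_of_lt (by norm_num) hz0]
    rw [show (-2 : ℝ) + 1 = -1 by norm_num, Real.rpow_neg_one]
    field_simp
  have hc2Int : MeasureTheory.IntegrableOn (fun μ : ℝ => (1 - a ^ 2) / (2 * μ ^ 2))
      (Set.Ioi z) := by
    apply MeasureTheory.IntegrableOn.congr_fun (hint2.const_mul ((1 - a ^ 2) / 2))
      (fun μ hμ => (hrw hμ).symm) measurableSet_Ioi
  have hdiff : (∫ μ in Set.Ioi z, (Real.sqrt ((μ ^ 2 - a ^ 2) / (μ ^ 2 - 1)) - 1))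
      - (1 - a ^ 2) / (2 * z)
      = ∫ μ in Set.Ioi z,
          (Real.sqrt ((μ ^ 2 - a ^ 2) / (μ ^ 2 - 1)) - 1 - (1 - a ^ 2) / (2 * μ ^ 2)) := by
    rw [← hcz, ← MeasureTheory.integral_sub hIoiz hc2Int]
  -- the error term bound
  have hbound : ‖∫ μ in Set.Ioi z,
      (Real.sqrt ((μ ^ 2 - a ^ 2) / (μ ^ 2 - 1)) - 1 - (1 - a ^ 2) / (2 * μ ^ 2))‖
      ≤ ∫ μ in Set.Ioi z, μ ^ (-3 : ℝ) := by
    apply MeasureTheory.norm_integral_le_of_norm_le hint3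
    rw [MeasureTheory.ae_restrict_iff' measurableSet_Ioi]
    filter_upwards with μ hμ
    have hμ2 : (2:ℝ) ≤ μ := le_of_lt (lt_of_le_of_lt hz hμ)
    have hμ0 : (0:ℝ) < μ := by linarith
    have hr : μ ^ (-3 : ℝ) = 1 / μ ^ 3 := by
      rw [show (-3 : ℝ) = -(3:ℕ) by norm_num, Real.rpow_neg hμ0.le, Real.rpow_natCast, one_div]
    rw [Real.norm_eq_abs, hr]
    exact GAsym.pointwise_bound a ha0 ha1 hμ2
  have hval3 : (∫ μ in Set.Ioi z, μ ^ (-3 : ℝ)) = 1 / (2 * z ^ 2) := by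
    rw [integral_Ioi_rpow_of_lt (by norm_num) hz0, show (-3 : ℝ) + 1 = -2 by norm_num]
    rw [show (-2 : ℝ) = -(2:ℕ) by norm_num, Real.rpow_neg hz0.le, Real.rpow_natCast]
    field_simp
    ring
  -- put everything together
  have key : (∫ μ in (1 : ℝ)..z, Real.sqrt ((μ ^ 2 - a ^ 2) / (μ ^ 2 - 1))) -
          (z + ((∫ μ in Set.Ioi (1 : ℝ),
              (Real.sqrt ((μ ^ 2 - a ^ 2) / (μ ^ 2 - 1)) - 1)) - 1) -
            (1 - a ^ 2) / (2 * z))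
      = -(∫ μ in Set.Ioi z,
          (Real.sqrt ((μ ^ 2 - a ^ 2) / (μ ^ 2 - 1)) - 1 - (1 - a ^ 2) / (2 * μ ^ 2))) := by
    rw [hg, hsplit, ← hdiff]; ring
  rw [key, norm_neg]
  calc ‖∫ μ in Set.Ioi z,
      (Real.sqrt ((μ ^ 2 - a ^ 2) / (μ ^ 2 - 1)) - 1 - (1 - a ^ 2) / (2 * μ ^ 2))‖
      ≤ ∫ μ in Set.Ioi z, μ ^ (-3 : ℝ) := hbound
    _ = 1 / (2 * z ^ 2) := hval3
    _ ≤ 1 * ‖1 / z ^ 2‖ := by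
        rw [Real.norm_eq_abs, abs_of_nonneg (by positivity), one_mul]
        rw [div_le_div_iff₀ (by positivity) (by positivity)]
        nlinarith [sq_nonneg z]
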